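/- (Scott) For countable L-structures M and N, if M ≡ᵇᶠ_α N for every countable ordinal α, then M is isomorphic to N. -/

import Mathlib

open FirstOrder

/-- Two tuples have the same quantifier-free type. -/
def QFEquiv (L : FirstOrder.Language) (M N : Type*) [L.Structure M] [L.Structure N]
    {n : ℕ} (a : Fin n → M) (b : Fin n → N) : Prop :=
  ∀ φ : L.Formula (Fin n), φ.IsQF → (φ.Realize a ↔ φ.Realize b)

/-- The standard symmetric back-and-forth relation of rank `α`. -/
def BF (L : FirstOrder.Language) (M N : Type*) [L.Structure M] [L.Structure N]
    (α : Ordinal) (n : ℕ) (a : Fin n → M) (b : Fin n → N) : Prop :=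
  (α = 0 ∧ QFEquiv L M N a b) ∨
  (α ≠ 0 ∧
    (∀ β < α, ∀ (m : ℕ) (c : Fin m → M), ∃ d : Fin m → N,
      BF L M N β (n + m) (Fin.append a c) (Fin.append b d)) ∧
    (∀ β < α, ∀ (m : ℕ) (d : Fin m → N), ∃ c : Fin m → M,
      BF L M N β (n + m) (Fin.append a c) (Fin.append b d)))
termination_by α

section Aux

universe uo

variable {L : FirstOrder.Language} {M N : Type*} [L.Structure M] [L.Structure N]

theorem BF_symm {α : Ordinal} : ∀ {n : ℕ} {a : Fin n → M} {b : Fin n → N},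
    BF L M N α n a b → BF L N M α n b a := by
  induction α using Ordinal.induction with
  | h α IH =>
    intro n a b h
    rw [BF] at h ⊢
    rcases h with ⟨rfl, hqf⟩ | ⟨hα, hf, hb⟩
    · exact Or.inl ⟨rfl, fun φ hφ => (hqf φ hφ).symm⟩
    · refine Or.inr ⟨hα, ?_, ?_⟩
      · intro β hβ m d
        obtain ⟨c, hc⟩ := hb β hβ m d
        exact ⟨c, IH β hβ hc⟩
      · intro β hβ m c
        obtain ⟨d, hd⟩ := hf β hβ m c
        exact ⟨d, IH β hβ hd⟩

theorem BF_mono {α β : Ordinal} (hβα : β ≤ α) {n : ℕ} {a : Fin n → M} {b : Fin n → N}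
    (h : BF L M N α n a b) : BF L M N β n a b := by
  rcases eq_or_lt_of_le hβα with rfl | hlt
  · exact h
  rw [BF] at h
  rcases h with ⟨rfl, _⟩ | ⟨hα, hforth, hback⟩
  · exact absurd hlt (not_lt_zero (a := β))
  rcases eq_or_ne β 0 with rfl | hβ0
  · obtain ⟨d, hd⟩ := hforth 0 hlt 0 Fin.elim0
    rw [BF] at hd
    rcases hd with ⟨-, hqf⟩ | ⟨h0, -⟩
    · rw [BF]
      refine Or.inl ⟨rfl, ?_⟩
      have ea : Fin.append a Fin.elim0 = a :=
        (Fin.append_elim0 a).trans (funext fun i => congrArg a (Fin.ext rfl))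
      have eb : Fin.append b d = b := by
        rw [Subsingleton.elim d Fin.elim0]
        exact (Fin.append_elim0 b).trans (funext fun i => congrArg b (Fin.ext rfl))
      rw [ea, eb] at hqf
      exact hqf
    · exact absurd rfl h0
  · rw [BF]
    exact Or.inr ⟨hβ0, fun γ hγ => hforth γ (hγ.trans hlt),
      fun γ hγ => hback γ (hγ.trans hlt)⟩

theorem good_forth [Countable N] {n : ℕ} {a : Fin n → M} {b : Fin n → N}
    (hg : ∀ α : Ordinal.{uo}, α < (Cardinal.aleph 1).ord → BF L M N α n a b) (c : Fin 1 → M) :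
    ∃ d : Fin 1 → N, ∀ α : Ordinal.{uo}, α < (Cardinal.aleph 1).ord →
      BF L M N α (n + 1) (Fin.append a c) (Fin.append b d) := by
  have hone : (1 : Ordinal) < (Cardinal.aleph 1).ord := by
    rw [Cardinal.lt_ord, Ordinal.card_one]
    exact lt_of_le_of_lt Cardinal.one_le_aleph0 Cardinal.aleph0_lt_aleph_one
  have hN : Nonempty N := by
    have h1 := hg 1 hone
    rw [BF] at h1
    rcases h1 with ⟨h0, -⟩ | ⟨-, hf, -⟩
    · exact absurd h0 one_ne_zero
    · obtain ⟨d, -⟩ := hf 0 zero_lt_one 1 c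
      exact ⟨d 0⟩
  by_contra hcon
  push_neg at hcon
  choose αf hαf hnBF using hcon
  obtain ⟨e, he⟩ := exists_surjective_nat (Fin 1 → N)
  have hδlt : (⨆ j : ℕ, αf (e j)) < (Cardinal.aleph 1).ord :=
    by
      rw [Cardinal.ord_aleph] at hαf ⊢
      exact Ordinal.iSup_lt_omega_one (fun j => hαf (e j))
  have hδsucc : (⨆ j : ℕ, αf (e j)) + 1 < (Cardinal.aleph 1).ord := by
    rw [Ordinal.add_one_eq_succ]
    exact (Cardinal.isSuccLimit_ord (le_of_lt Cardinal.aleph0_lt_aleph_one)).succ_lt hδlt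
  have hBF := hg ((⨆ j : ℕ, αf (e j)) + 1) hδsucc
  rw [BF] at hBF
  have hlt : (⨆ j : ℕ, αf (e j)) < (⨆ j : ℕ, αf (e j)) + 1 := by
    rw [Ordinal.add_one_eq_succ]; exact Order.lt_succ _
  rcases hBF with ⟨h0, -⟩ | ⟨-, hf, -⟩
  · exact absurd h0 (ne_of_gt (lt_of_le_of_lt zero_le hlt))
  · obtain ⟨d, hd⟩ := hf _ hlt 1 c
    obtain ⟨j, hj⟩ := he d
    refine hnBF d (BF_mono ?_ hd)
    exact hj ▸ Ordinal.le_iSup (fun j => αf (e j)) j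

theorem good_back [Countable M] {n : ℕ} {a : Fin n → M} {b : Fin n → N}
    (hg : ∀ α : Ordinal.{uo}, α < (Cardinal.aleph 1).ord → BF L M N α n a b) (d : Fin 1 → N) :
    ∃ c : Fin 1 → M, ∀ α : Ordinal.{uo}, α < (Cardinal.aleph 1).ord →
      BF L M N α (n + 1) (Fin.append a c) (Fin.append b d) := by
  have hg' : ∀ α : Ordinal.{uo}, α < (Cardinal.aleph 1).ord → BF L N M α n b a :=
    fun α hα => BF_symm (hg α hα)
  obtain ⟨c, hc⟩ := good_forth hg' d
  exact ⟨c, fun α hα => BF_symm (hc α hα)⟩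

end Aux

/-- Scott: countable back-and-forth equivalent structures (equivalent at every
countable ordinal rank) are isomorphic. -/
theorem scott_theorem {L : FirstOrder.Language} {M N : Type*}
    [L.Structure M] [L.Structure N] [Countable M] [Countable N]
    (h : ∀ α : Ordinal, α.card ≤ Cardinal.aleph0 →
      BF L M N α 0 (fun i => i.elim0) (fun i => i.elim0)) :
    Nonempty (M ≃[L] N) := by
  classical
  have h1 : ∀ α : Ordinal, α < (Cardinal.aleph 1).ord →
      BF L M N α 0 (fun i => i.elim0) (fun i => i.elim0) := by
    intro α hα
    refine h α ?_
    rw [Cardinal.lt_ord, ← Cardinal.succ_aleph0, Order.lt_succ_iff] at hα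
    exact hα
  have hone : (1 : Ordinal) < (Cardinal.aleph 1).ord := by
    rw [Cardinal.lt_ord, Ordinal.card_one]
    exact lt_of_le_of_lt Cardinal.one_le_aleph0 Cardinal.aleph0_lt_aleph_one
  have hzero : (0 : Ordinal) < (Cardinal.aleph 1).ord := zero_lt_one.trans hone
  by_cases hM : Nonempty M
  case neg =>
    -- M is empty; show N is empty and build the trivial isomorphism.
    have hMe : IsEmpty M := not_nonempty_iff.mp hM
    have hNe : IsEmpty N := by
      by_contra hN
      obtain ⟨y⟩ := not_isEmpty_iff.mp hN
      have hBF := h1 1 hone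
      rw [BF] at hBF
      rcases hBF with ⟨h0, -⟩ | ⟨-, -, hb⟩
      · exact one_ne_zero h0
      · obtain ⟨c, -⟩ := hb 0 zero_lt_one 1 (fun _ => y)
        exact hMe.false (c 0)
    have hqf : QFEquiv L M N (fun i : Fin 0 => i.elim0) (fun i => i.elim0) := by
      have hBF := h1 0 hzero
      rw [BF] at hBF
      rcases hBF with ⟨-, hqf⟩ | ⟨h0, -⟩
      · exact hqf
      · exact absurd rfl h0
    refine ⟨⟨Equiv.equivOfIsEmpty M N, ?_, ?_⟩⟩
    · intro n f x
      exact (hMe.false (Language.Structure.funMap f x)).elim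
    · intro n r x
      match n, r, x with
      | 0, r, x =>
        have := hqf (r.formula (fun i : Fin 0 => i.elim0))
          ((FirstOrder.Language.BoundedFormula.IsAtomic.rel _ _).isQF)
        rw [FirstOrder.Language.Formula.realize_rel,
          FirstOrder.Language.Formula.realize_rel] at this
        convert this.symm using 2 <;> exact Subsingleton.elim _ _
      | n + 1, r, x => exact (hMe.false (x 0)).elim
  case pos =>
    have hN : Nonempty N := by
      obtain ⟨m⟩ := hM
      have hBF := h1 1 hone
      rw [BF] at hBF
      rcases hBF with ⟨h0, -⟩ | ⟨-, hf, -⟩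
      · exact absurd h0 one_ne_zero
      · obtain ⟨d, -⟩ := hf 0 zero_lt_one 1 (fun _ => m)
        exact ⟨d 0⟩
    obtain ⟨eM, heM⟩ := exists_surjective_nat M
    obtain ⟨eN, heN⟩ := exists_surjective_nat N
    -- one step of the back-and-forth construction
    have step : ∀ (k : ℕ) (a : Fin k → M) (b : Fin k → N),
        (∀ α < (Cardinal.aleph 1).ord, BF L M N α k a b) →
        ∃ (a' : Fin (k + 1) → M) (b' : Fin (k + 1) → N),
          (∀ α < (Cardinal.aleph 1).ord, BF L M N α (k + 1) a' b') ∧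
          (∀ i : Fin k, a' i.castSucc = a i ∧ b' i.castSucc = b i) ∧
          (Even k → a' (Fin.last k) = eM (k / 2)) ∧
          (¬ Even k → b' (Fin.last k) = eN (k / 2)) := by
      intro k a b hab
      have hlast : Fin.last k = Fin.natAdd k (0 : Fin 1) := by
        ext; simp
      by_cases hk : Even k
      · obtain ⟨d, hd⟩ := good_forth hab (fun _ => eM (k / 2))
        refine ⟨_, _, hd, fun i => ⟨Fin.append_left _ _ i, Fin.append_left _ _ i⟩,
          fun _ => ?_, fun hc => absurd hk hc⟩
        rw [hlast, Fin.append_right]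
      · obtain ⟨c, hc⟩ := good_back hab (fun _ => eN (k / 2))
        refine ⟨_, _, hc, fun i => ⟨Fin.append_left _ _ i, Fin.append_left _ _ i⟩,
          fun hc' => absurd hc' hk, fun _ => ?_⟩
        rw [hlast, Fin.append_right]
    choose a' b' hGood hext hMl hNl using step
    have base : ∀ α < (Cardinal.aleph 1).ord,
        BF L M N α 0 (Fin.elim0 : Fin 0 → M) (Fin.elim0 : Fin 0 → N) := fun α hα => h1 α hα
    -- the chain of tuples
    obtain ⟨s, hs⟩ : ∃ s : ∀ k : ℕ, {p : (Fin k → M) × (Fin k → N) //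
          ∀ α < (Cardinal.aleph 1).ord, BF L M N α k p.1 p.2},
        ∀ k, (s (k + 1)).1.1 = a' k (s k).1.1 (s k).1.2 (s k).2 ∧
          (s (k + 1)).1.2 = b' k (s k).1.1 (s k).1.2 (s k).2 := by
      refine ⟨fun k => Nat.rec ⟨(Fin.elim0, Fin.elim0), base⟩
        (fun k p => ⟨(a' k p.1.1 p.1.2 p.2, b' k p.1.1 p.1.2 p.2),
          hGood k p.1.1 p.1.2 p.2⟩) k, fun k => ⟨rfl, rfl⟩⟩
    set A : ℕ → M := fun k => (s (k + 1)).1.1 (Fin.last k) with hAdef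
    set B : ℕ → N := fun k => (s (k + 1)).1.2 (Fin.last k) with hBdef
    have hA : ∀ (k : ℕ) (i : Fin k), (s k).1.1 i = A i.val ∧ (s k).1.2 i = B i.val := by
      intro k
      induction k with
      | zero => exact fun i => i.elim0
      | succ k ih =>
        intro i
        refine Fin.lastCases ?_ (fun j => ?_) i
        · exact ⟨rfl, rfl⟩
        · obtain ⟨e1, e2⟩ := hs k
          obtain ⟨f1, f2⟩ := hext k (s k).1.1 (s k).1.2 (s k).2 j
          constructor
          · rw [e1, f1, Fin.coe_castSucc]
            exact (ih j).1
          · rw [e2, f2, Fin.coe_castSucc]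
            exact (ih j).2
    -- coverage
    have hAcov : ∀ m : M, ∃ k, A k = m := by
      intro m
      obtain ⟨j, rfl⟩ := heM m
      refine ⟨2 * j, ?_⟩
      have := hMl (2 * j) (s (2 * j)).1.1 (s (2 * j)).1.2 (s (2 * j)).2 (even_two_mul j)
      rw [hAdef]
      simp only
      rw [(hs (2 * j)).1, this]
      congr 1
      omega
    have hBcov : ∀ y : N, ∃ k, B k = y := by
      intro y
      obtain ⟨j, rfl⟩ := heN y
      refine ⟨2 * j + 1, ?_⟩
      have := hNl (2 * j + 1) (s (2 * j + 1)).1.1 (s (2 * j + 1)).1.2 (s (2 * j + 1)).2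
        (by simp [Nat.even_add_one, Nat.even_iff, Nat.mul_mod_right])
      rw [hBdef]
      simp only
      rw [(hs (2 * j + 1)).2, this]
      congr 1
      omega
    -- quantifier-free equivalence of the chain
    have hQF : ∀ K : ℕ, QFEquiv L M N (fun i : Fin K => A i.val) (fun i : Fin K => B i.val) := by
      intro K
      have hBF := (s K).2 0 hzero
      rw [BF] at hBF
      rcases hBF with ⟨-, hqf⟩ | ⟨h0, -⟩
      · have e1 : (s K).1.1 = fun i : Fin K => A i.val := funext fun i => (hA K i).1
        have e2 : (s K).1.2 = fun i : Fin K => B i.val := funext fun i => (hA K i).2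
        rw [e1, e2] at hqf
        exact hqf
      · exact absurd rfl h0
    -- key equality transfer
    have hABiff : ∀ k k' : ℕ, A k = A k' ↔ B k = B k' := by
      intro k k'
      have hk : k < max k k' + 1 := by omega
      have hk' : k' < max k k' + 1 := by omega
      have := hQF (max k k' + 1)
        (FirstOrder.Language.Term.equal
          (FirstOrder.Language.Term.var ⟨k, hk⟩) (FirstOrder.Language.Term.var ⟨k', hk'⟩))
        ((FirstOrder.Language.BoundedFormula.IsAtomic.equal _ _).isQF)
      simpa only [FirstOrder.Language.Formula.realize_equal,
        FirstOrder.Language.Term.realize_var] using this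
    choose kM hkM using hAcov
    choose kN hkN using hBcov
    refine ⟨⟨⟨fun m => B (kM m), fun y => A (kN y), ?_, ?_⟩, ?_, ?_⟩⟩
    · intro m
      simp only
      have hB : B (kN (B (kM m))) = B (kM m) := hkN _
      have := (hABiff (kN (B (kM m))) (kM m)).2 hB
      rw [this, hkM]
    · intro y
      simp only
      have hAeq : A (kM (A (kN y))) = A (kN y) := hkM _
      have := (hABiff (kM (A (kN y))) (kN y)).1 hAeq
      rw [this, hkN]
    · intro m f x
      simp only [Equiv.coe_fn_mk]
      set K := (Finset.univ.sup fun i => kM (x i)) + kM (Language.Structure.funMap f x) + 1 with hK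
      have hxi : ∀ i, kM (x i) < K := by
        intro i
        have h2 : kM (x i) ≤ Finset.univ.sup fun i => kM (x i) :=
          Finset.le_sup (f := fun i => kM (x i)) (Finset.mem_univ i)
        omega
      have h0 : kM (Language.Structure.funMap f x) < K := by omega
      have key := hQF K
        (FirstOrder.Language.Term.equal
          (FirstOrder.Language.Term.func f (fun i => FirstOrder.Language.Term.var ⟨kM (x i), hxi i⟩))
          (FirstOrder.Language.Term.var ⟨kM (Language.Structure.funMap f x), h0⟩))
        ((FirstOrder.Language.BoundedFormula.IsAtomic.equal _ _).isQF)
      simp only [FirstOrder.Language.Formula.realize_equal,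
        FirstOrder.Language.Term.realize_func, FirstOrder.Language.Term.realize_var] at key
      have hL : Language.Structure.funMap f (fun i => A (kM (x i))) = A (kM (Language.Structure.funMap f x)) := by
        rw [hkM]
        congr 1
        funext i
        rw [hkM]
      have hR := key.1 hL
      exact (hR.symm : B (kM (Language.Structure.funMap f x)) = _)
    · intro m r x
      simp only [Equiv.coe_fn_mk]
      set K := (Finset.univ.sup fun i => kM (x i)) + 1 with hK
      have hxi : ∀ i, kM (x i) < K := by
        intro i
        have h2 : kM (x i) ≤ Finset.univ.sup fun i => kM (x i) :=
          Finset.le_sup (f := fun i => kM (x i)) (Finset.mem_univ i)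
        omega
      have key := hQF K
        (FirstOrder.Language.Relations.formula r
          (fun i => FirstOrder.Language.Term.var ⟨kM (x i), hxi i⟩))
        ((FirstOrder.Language.BoundedFormula.IsAtomic.rel _ _).isQF)
      simp only [FirstOrder.Language.Formula.realize_rel,
        FirstOrder.Language.Term.realize_var] at key
      have hx : (fun i => A (kM (x i))) = x := funext fun i => hkM (x i)
      rw [hx] at key
      exact key.symm
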